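/- For the MEDR problem, the critical payment of any winning agent i is at most α·γ·s_i: if agent i bids cost b_i > α·γ·s_i (others fixed), then removing i from any solution containing i and covering the shortfall γ·s_i with backup storage strictly decreases the objective, so i cannot win under an exact optimal allocation. Hence binary search for the critical value over [b_i, α·γ·s_i] is correct. -/
import Mathlib


/-- Upper bound on the critical payment in MEDR: under an exact optimal allocation with
ties broken against higher-cost agents (a winner must strictly improve the objective over
dropping it), an agent bidding cost `b_i > α·γ·s_i` cannot win. -/
theorem stmt_13 (n : ℕ) (α γ W : ℝ) (hα : 0 < α) (hγ : 0 < γ)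
    (cost : (Fin n → ℝ × ℝ) → Finset (Fin n) → ℝ)
    (hcost : ∀ B S, cost B S =
      ∑ i ∈ S, (B i).2 + α * max (W - γ * ∑ i ∈ S, (B i).1) 0)
    (Alg : (Fin n → ℝ × ℝ) → Finset (Fin n))
    (hopt : ∀ B S, cost B (Alg B) ≤ cost B S)
    (htie : ∀ (B : Fin n → ℝ × ℝ) (i : Fin n), i ∈ Alg B →
      cost B (Alg B) < cost B ((Alg B).erase i))
    (B : Fin n → ℝ × ℝ) (hB : ∀ j, 0 ≤ (B j).1 ∧ 0 ≤ (B j).2) (i : Fin n)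
    (hbig : α * γ * (B i).1 < (B i).2) :
    i ∉ Alg B := by
  intro hi
  have hlt := htie B i hi
  set S := Alg B with hS
  have hsum2 : ∑ j ∈ S, (B j).2 = ∑ j ∈ S.erase i, (B j).2 + (B i).2 := by
    rw [Finset.sum_erase_add _ _ hi]
  have hsum1 : ∑ j ∈ S, (B j).1 = ∑ j ∈ S.erase i, (B j).1 + (B i).1 := by
    rw [Finset.sum_erase_add _ _ hi]
  -- bound on max terms
  have hsi : 0 ≤ (B i).1 := (hB i).1
  have hmax : max (W - γ * ∑ j ∈ S.erase i, (B j).1) 0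
      ≤ max (W - γ * ∑ j ∈ S, (B j).1) 0 + γ * (B i).1 := by
    rw [hsum1]
    have h1 : W - γ * (∑ j ∈ S.erase i, (B j).1) =
        (W - γ * ((∑ j ∈ S.erase i, (B j).1) + (B i).1)) + γ * (B i).1 := by ring
    apply max_le
    · rw [h1]
      gcongr
      exact le_max_left _ _
    · positivity
  -- cost of erase ≤ cost S - b_i + αγ s_i
  have : cost B (S.erase i) ≤ cost B S - (B i).2 + α * γ * (B i).1 := by
    rw [hsum1] at hmax
    have h2 := mul_le_mul_of_nonneg_left hmax hα.le
    rw [hcost, hcost, hsum2, hsum1]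
    nlinarith [h2]
  linarith [hlt, this]
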